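/- arXiv:1506.00448 — 4 statements merged into one kernel-verified Lean document; each statement's English description precedes it below -/
import Mathlib

section
/- Let n > 0, let φ : ℤ/pℤ → ℝ/ℤ be a homomorphism, χ = e^{2πiφ}, let Γ be a finite set of pre-characters containing φ, and let ℬ = ℬ(Γ,n). If f : ℤ/pℤ → ℂ satisfies ‖f‖_∞ ≤ 1, then |⟨f − 𝔼(f|ℬ), χ⟩| ≤ 2π/n. -/
open Finset Complex

noncomputable section
open scoped Classical

/-- The representative of a point of `𝕋 = ℝ/ℤ` lying in `[0,1)`. -/
def torusRep (t : AddCircle (1 : ℝ)) : ℝ :=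
  haveI : Fact ((0 : ℝ) < 1) := ⟨one_pos⟩
  ((AddCircle.equivIco 1 0) t : ℝ)

/-- Same cell of the partition `ℬ(Γ,n)`. -/
def sameCell (p : ℕ) (Γ : Finset (ZMod p →+ AddCircle (1 : ℝ))) (n : ℕ)
    (x y : ZMod p) : Prop :=
  ∀ φ ∈ Γ, ⌊(n : ℝ) * torusRep (φ x)⌋ = ⌊(n : ℝ) * torusRep (φ y)⌋

/-- Conditional expectation of `f` with respect to the partition `ℬ(Γ,n)`:
the average of `f` over the cell containing `x`. -/
def condExp (p : ℕ) [NeZero p] (Γ : Finset (ZMod p →+ AddCircle (1 : ℝ))) (n : ℕ)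
    (f : ZMod p → ℂ) (x : ZMod p) : ℂ :=
  (∑ y ∈ Finset.univ.filter (sameCell p Γ n x), f y) /
    ((Finset.univ.filter (sameCell p Γ n x)).card : ℂ)

/-! ### Auxiliary lemmas -/

lemma sameCell_refl (p : ℕ) (Γ : Finset (ZMod p →+ AddCircle (1 : ℝ))) (n : ℕ)
    (x : ZMod p) : sameCell p Γ n x x := fun _ _ => rfl

lemma sameCell_symm {p : ℕ} {Γ : Finset (ZMod p →+ AddCircle (1 : ℝ))} {n : ℕ}
    {x y : ZMod p} (h : sameCell p Γ n x y) : sameCell p Γ n y x :=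
  fun ψ hψ => (h ψ hψ).symm

lemma sameCell_trans {p : ℕ} {Γ : Finset (ZMod p →+ AddCircle (1 : ℝ))} {n : ℕ}
    {x y z : ZMod p} (h : sameCell p Γ n x y) (h' : sameCell p Γ n y z) :
    sameCell p Γ n x z := fun ψ hψ => (h ψ hψ).trans (h' ψ hψ)

lemma cell_eq {p : ℕ} [NeZero p] {Γ : Finset (ZMod p →+ AddCircle (1 : ℝ))} {n : ℕ}
    {x y : ZMod p} (h : sameCell p Γ n x y) :
    Finset.univ.filter (sameCell p Γ n x) = Finset.univ.filter (sameCell p Γ n y) := by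
  ext z
  simp only [Finset.mem_filter, Finset.mem_univ, true_and]
  exact ⟨fun hz => sameCell_trans (sameCell_symm h) hz, fun hz => sameCell_trans h hz⟩

lemma cell_card_pos (p : ℕ) [NeZero p] (Γ : Finset (ZMod p →+ AddCircle (1 : ℝ))) (n : ℕ)
    (x : ZMod p) : 0 < (Finset.univ.filter (sameCell p Γ n x)).card := by
  refine Finset.card_pos.2 ⟨x, ?_⟩
  simp [sameCell_refl]

/-- Self-adjointness of conditional expectation. -/
lemma condExp_adjoint (p : ℕ) [NeZero p] (Γ : Finset (ZMod p →+ AddCircle (1 : ℝ))) (n : ℕ)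
    (f g : ZMod p → ℂ) :
    ∑ x : ZMod p, condExp p Γ n f x * (starRingEnd ℂ) (g x)
      = ∑ x : ZMod p, f x * (starRingEnd ℂ) (condExp p Γ n g x) := by
  have key : ∀ x : ZMod p, condExp p Γ n f x * (starRingEnd ℂ) (g x)
      = ∑ y ∈ Finset.univ.filter (sameCell p Γ n x),
          f y * (starRingEnd ℂ) (g x) / ((Finset.univ.filter (sameCell p Γ n x)).card : ℂ) := by
    intro x
    rw [condExp, div_mul_eq_mul_div, Finset.sum_mul, Finset.sum_div]
  have key2 : ∀ x : ZMod p, f x * (starRingEnd ℂ) (condExp p Γ n g x)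
      = ∑ y ∈ Finset.univ.filter (sameCell p Γ n x),
          f x * (starRingEnd ℂ) (g y) / ((Finset.univ.filter (sameCell p Γ n x)).card : ℂ) := by
    intro x
    rw [condExp, map_div₀, map_sum, map_natCast, ← mul_div_assoc, Finset.mul_sum,
      Finset.sum_div]
  simp only [key, key2]
  rw [Finset.sum_comm' (s := Finset.univ) (t := fun x => Finset.univ.filter (sameCell p Γ n x))
    (t' := Finset.univ) (s' := fun y => Finset.univ.filter (sameCell p Γ n y))
    (fun x y => by
      simp only [Finset.mem_filter, Finset.mem_univ, true_and, and_comm]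
      exact ⟨fun h => sameCell_symm h, fun h => sameCell_symm h⟩)]
  refine Finset.sum_congr rfl fun y _ => Finset.sum_congr rfl fun x hx => ?_
  simp only [Finset.mem_filter, Finset.mem_univ, true_and] at hx
  rw [cell_eq hx]

lemma norm_exp_mul_I_sub_one_le (t : ℝ) : ‖Complex.exp (t * Complex.I) - 1‖ ≤ |t| := by
  have h1 : ‖Complex.exp (t * Complex.I) - 1‖ ^ 2 ≤ t ^ 2 := by
    rw [← Complex.normSq_eq_norm_sq]
    rw [Complex.exp_mul_I]
    have : (Complex.cos t + Complex.sin t * Complex.I - 1)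
        = Complex.ofReal (Real.cos t - 1) + Complex.ofReal (Real.sin t) * Complex.I := by
      push_cast [Complex.cos_ofReal_re, Complex.sin_ofReal_re]
      ring
    rw [this, Complex.normSq_add_mul_I]
    have h2 : (Real.cos t - 1) ^ 2 + Real.sin t ^ 2 = 2 - 2 * Real.cos t := by
      nlinarith [Real.sin_sq_add_cos_sq t]
    have h3 : Real.sin (t / 2) ^ 2 = (1 - Real.cos t) / 2 := by
      have hc := Real.cos_sq (t / 2)
      have hsc := Real.sin_sq_add_cos_sq (t / 2)
      rw [show 2 * (t / 2) = t by ring] at hc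
      linarith
    have h4 : |Real.sin (t / 2)| ≤ |t / 2| := Real.abs_sin_le_abs
    nlinarith [_root_.sq_abs (Real.sin (t / 2)), _root_.sq_abs (t / 2), abs_nonneg (t / 2),
      abs_nonneg (Real.sin (t / 2))]
  nlinarith [norm_nonneg (Complex.exp (t * Complex.I) - 1), abs_nonneg t, _root_.sq_abs t]

lemma norm_exp_sub_exp_le (a b : ℝ) :
    ‖Complex.exp (2 * Real.pi * Complex.I * a) - Complex.exp (2 * Real.pi * Complex.I * b)‖
      ≤ 2 * Real.pi * |a - b| := by
  have h : Complex.exp (2 * Real.pi * Complex.I * a) - Complex.exp (2 * Real.pi * Complex.I * b)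
      = Complex.exp (2 * Real.pi * Complex.I * b)
        * (Complex.exp (((2 * Real.pi * (a - b) : ℝ)) * Complex.I) - 1) := by
    rw [mul_sub, mul_one, ← Complex.exp_add]
    push_cast
    ring_nf
  rw [h, norm_mul]
  have hb : ‖Complex.exp (2 * Real.pi * Complex.I * b)‖ = 1 := by
    have : (2 * Real.pi * Complex.I * b) = Complex.ofReal (2 * Real.pi * b) * Complex.I := by
      push_cast; ring
    rw [this, Complex.norm_exp_ofReal_mul_I]
  rw [hb, one_mul]
  calc ‖Complex.exp (((2 * Real.pi * (a - b) : ℝ)) * Complex.I) - 1‖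
      ≤ |2 * Real.pi * (a - b)| := norm_exp_mul_I_sub_one_le _
    _ = 2 * Real.pi * |a - b| := by
        rw [abs_mul, _root_.abs_of_nonneg (by positivity : (0:ℝ) ≤ 2 * Real.pi)]

/-- Pointwise bound: `‖χ x - 𝔼(χ|ℬ) x‖ ≤ 2π/n`. -/
lemma pointwise_bound (p : ℕ) [NeZero p] (Γ : Finset (ZMod p →+ AddCircle (1 : ℝ))) (n : ℕ)
    (hn : 0 < n) (φ : ZMod p →+ AddCircle (1 : ℝ)) (hφ : φ ∈ Γ) (x : ZMod p) :
    ‖Complex.exp (2 * Real.pi * Complex.I * torusRep (φ x))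
      - condExp p Γ n (fun y => Complex.exp (2 * Real.pi * Complex.I * torusRep (φ y))) x‖
      ≤ 2 * Real.pi / n := by
  set χ : ZMod p → ℂ := fun y => Complex.exp (2 * Real.pi * Complex.I * torusRep (φ y)) with hχ
  set s := Finset.univ.filter (sameCell p Γ n x) with hs
  have hcard : 0 < s.card := cell_card_pos p Γ n x
  have hcardC : (s.card : ℂ) ≠ 0 := by exact_mod_cast hcard.ne'
  have hrw : χ x - condExp p Γ n χ x = (∑ y ∈ s, (χ x - χ y)) / (s.card : ℂ) := by
    have hnum : (∑ y ∈ s, (χ x - χ y)) = (s.card : ℂ) * χ x - ∑ y ∈ s, χ y := by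
      rw [Finset.sum_sub_distrib, Finset.sum_const, nsmul_eq_mul]
    rw [condExp, ← hs, hnum, sub_div, mul_div_cancel_left₀ _ hcardC]
  rw [hrw]
  have hbound : ∀ y ∈ s, ‖χ x - χ y‖ ≤ 2 * Real.pi / n := by
    intro y hy
    simp only [hs, Finset.mem_filter, Finset.mem_univ, true_and] at hy
    have hfloor := hy φ hφ
    have habs : |torusRep (φ x) - torusRep (φ y)| < 1 / n := by
      have h1 : |(n : ℝ) * torusRep (φ x) - (n : ℝ) * torusRep (φ y)| < 1 :=
        Int.abs_sub_lt_one_of_floor_eq_floor hfloor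
      rw [← mul_sub, abs_mul, Nat.abs_cast] at h1
      rw [lt_div_iff₀ (by positivity : (0:ℝ) < n)]
      linarith [h1, mul_comm (|torusRep (φ x) - torusRep (φ y)|) (n : ℝ)]
    calc ‖χ x - χ y‖ ≤ 2 * Real.pi * |torusRep (φ x) - torusRep (φ y)| :=
          norm_exp_sub_exp_le _ _
      _ ≤ 2 * Real.pi * (1 / n) := by
          exact mul_le_mul_of_nonneg_left habs.le (by positivity)
      _ = 2 * Real.pi / n := by ring
  calc ‖(∑ y ∈ s, (χ x - χ y)) / (s.card : ℂ)‖
      = ‖∑ y ∈ s, (χ x - χ y)‖ / (s.card : ℝ) := by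
        rw [norm_div, Complex.norm_natCast]
    _ ≤ (∑ y ∈ s, ‖χ x - χ y‖) / (s.card : ℝ) := by
        gcongr
        exact norm_sum_le _ _
    _ ≤ (s.card * (2 * Real.pi / n)) / (s.card : ℝ) := by
        gcongr
        calc (∑ y ∈ s, ‖χ x - χ y‖) ≤ ∑ _y ∈ s, (2 * Real.pi / n) :=
              Finset.sum_le_sum hbound
          _ = s.card * (2 * Real.pi / n) := by rw [Finset.sum_const, nsmul_eq_mul]
    _ = 2 * Real.pi / n := by
        have hcR : (s.card : ℝ) ≠ 0 := by exact_mod_cast hcard.ne'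
        field_simp

theorem fourier_coeff_of_proj_error (p : ℕ) (hp : p.Prime) (n : ℕ) (hn : 0 < n)
    (Γ : Finset (ZMod p →+ AddCircle (1 : ℝ))) (φ : ZMod p →+ AddCircle (1 : ℝ))
    (hφ : φ ∈ Γ) (f : ZMod p → ℂ) (hf : ∀ x, ‖f x‖ ≤ 1) :
    haveI : NeZero p := ⟨hp.ne_zero⟩
    ‖(1 / p : ℂ) * ∑ x : ZMod p,
        (f x - condExp p Γ n f x) *
          (starRingEnd ℂ) (Complex.exp (2 * Real.pi * Complex.I * torusRep (φ x)))‖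
      ≤ 2 * Real.pi / n := by
  haveI : NeZero p := ⟨hp.ne_zero⟩
  set χ : ZMod p → ℂ := fun y => Complex.exp (2 * Real.pi * Complex.I * torusRep (φ y)) with hχ
  have hp0 : 0 < p := hp.pos
  have step1 : ∑ x : ZMod p, (f x - condExp p Γ n f x) * (starRingEnd ℂ) (χ x)
      = ∑ x : ZMod p, f x * (starRingEnd ℂ) (χ x - condExp p Γ n χ x) := by
    have h1 : ∑ x : ZMod p, (f x - condExp p Γ n f x) * (starRingEnd ℂ) (χ x)
        = ∑ x : ZMod p, f x * (starRingEnd ℂ) (χ x)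
          - ∑ x : ZMod p, condExp p Γ n f x * (starRingEnd ℂ) (χ x) := by
      rw [← Finset.sum_sub_distrib]
      exact Finset.sum_congr rfl fun x _ => by ring
    rw [h1, condExp_adjoint p Γ n f χ, ← Finset.sum_sub_distrib]
    refine Finset.sum_congr rfl fun x _ => ?_
    rw [map_sub]; ring
  rw [step1, norm_mul]
  have hnorm : ‖(1 / p : ℂ)‖ = 1 / p := by
    rw [norm_div, norm_one, Complex.norm_natCast]
  rw [hnorm]
  have hsum : ‖∑ x : ZMod p, f x * (starRingEnd ℂ) (χ x - condExp p Γ n χ x)‖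
      ≤ p * (2 * Real.pi / n) := by
    calc ‖∑ x : ZMod p, f x * (starRingEnd ℂ) (χ x - condExp p Γ n χ x)‖
        ≤ ∑ x : ZMod p, ‖f x * (starRingEnd ℂ) (χ x - condExp p Γ n χ x)‖ :=
          norm_sum_le _ _
      _ ≤ ∑ _x : ZMod p, (2 * Real.pi / n) := by
          refine Finset.sum_le_sum fun x _ => ?_
          rw [norm_mul, RingHomIsometric.norm_map]
          calc ‖f x‖ * ‖χ x - condExp p Γ n χ x‖
              ≤ 1 * (2 * Real.pi / n) := by
                apply mul_le_mul (hf x) (pointwise_bound p Γ n hn φ hφ x)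
                  (norm_nonneg _) zero_le_one
            _ = 2 * Real.pi / n := one_mul _
      _ = p * (2 * Real.pi / n) := by
          rw [Finset.sum_const, Finset.card_univ, ZMod.card, nsmul_eq_mul]
  calc (1 / (p:ℝ)) * ‖∑ x : ZMod p, f x * (starRingEnd ℂ) (χ x - condExp p Γ n χ x)‖
      ≤ (1 / (p:ℝ)) * (p * (2 * Real.pi / n)) := by
        apply mul_le_mul_of_nonneg_left hsum (by positivity)
    _ = 2 * Real.pi / n := by
        field_simp
  
end
end

section
/- Energy-increment/uniformization: For every δ ∈ (0,1] and every f : ℤ/pℤ → ℂ with ‖f‖_∞ ≤ 1, there exist a set Γ of pre-characters with |Γ| ≤ 4/δ² and a positive integer n ≤ 16/δ such that, setting ℬ = ℬ(Γ,n), for every character χ of ℤ/pℤ one has |⟨f − 𝔼(f|ℬ), χ⟩| ≤ δ. -/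
open Finset Complex

noncomputable section
open scoped Classical

/-- The character `χ_r(x) = e^{2πirx/p}`. -/
def chi (p : ℕ) [NeZero p] (r x : ZMod p) : ℂ :=
  Complex.exp (2 * Real.pi * Complex.I * (r.val : ℂ) * (x.val : ℂ) / p)

theorem expLip (a b : ℝ) : ‖Complex.exp (↑a * Complex.I) - Complex.exp (↑b * Complex.I)‖ ≤ |a - b| := by
  have key : ∀ t : ℝ, HasDerivAt (fun s : ℝ => Complex.exp (↑s * Complex.I)) (Complex.exp (↑t * Complex.I) * Complex.I) t := by
    intro t
    have h1 : HasDerivAt (fun s : ℝ => (↑s * Complex.I : ℂ)) Complex.I t := by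
      simpa using (Complex.ofRealCLM.hasDerivAt (x := t)).mul_const Complex.I
    simpa using h1.cexp
  have bound : ∀ t : ℝ, t ∈ Set.univ → ‖Complex.exp (↑t * Complex.I) * Complex.I‖ ≤ 1 := by
    intro t _
    rw [norm_mul, Complex.norm_exp_ofReal_mul_I, Complex.norm_I, one_mul]
  have := Convex.norm_image_sub_le_of_norm_hasDerivWithin_le
    (f := fun s : ℝ => Complex.exp (↑s * Complex.I))
    (f' := fun t : ℝ => Complex.exp (↑t * Complex.I) * Complex.I) (s := Set.univ) (C := 1)
    (fun t _ => (key t).hasDerivWithinAt) bound convex_univ (Set.mem_univ b) (Set.mem_univ a)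
  simpa [Real.norm_eq_abs] using this

theorem floor_dist {u v : ℝ} (h : ⌊u⌋ = ⌊v⌋) : |u - v| < 1 := by
  rw [abs_sub_lt_iff]
  constructor
  · have h1 : u < ⌊u⌋ + 1 := Int.lt_floor_add_one u
    have h2 : (⌊v⌋ : ℝ) ≤ v := Int.floor_le v
    rw [h] at h1; linarith
  · have h1 : v < ⌊v⌋ + 1 := Int.lt_floor_add_one v
    have h2 : (⌊u⌋ : ℝ) ≤ u := Int.floor_le u
    rw [h] at h2; linarith

def preChar (p : ℕ) [NeZero p] (r : ZMod p) : ZMod p →+ AddCircle (1 : ℝ) :=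
  (ZMod.toAddCircle).comp (AddMonoidHom.mulLeft r)

namespace Unif
variable {p : ℕ} [NeZero p] (Γ : Finset (ZMod p →+ AddCircle (1 : ℝ))) (n : ℕ)

abbrev cell (x : ZMod p) : Finset (ZMod p) := Finset.univ.filter (sameCell p Γ n x)

lemma cell_refl (x : ZMod p) : sameCell p Γ n x x := fun _ _ => rfl

lemma cell_symm {x y : ZMod p} (h : sameCell p Γ n x y) : sameCell p Γ n y x :=
  fun φ hφ => (h φ hφ).symm

lemma cell_trans {x y z : ZMod p} (h : sameCell p Γ n x y) (h' : sameCell p Γ n y z) :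
    sameCell p Γ n x z := fun φ hφ => (h φ hφ).trans (h' φ hφ)

lemma mem_cell {x y : ZMod p} : y ∈ cell Γ n x ↔ sameCell p Γ n x y := by
  simp [cell]

lemma cell_eq {x y : ZMod p} (h : sameCell p Γ n x y) : cell Γ n x = cell Γ n y := by
  ext z
  simp only [mem_cell]
  exact ⟨fun hz => cell_trans Γ n (cell_symm Γ n h) hz, fun hz => cell_trans Γ n h hz⟩

lemma card_cell_pos (x : ZMod p) : 0 < (cell Γ n x).card :=
  Finset.card_pos.mpr ⟨x, (mem_cell Γ n).mpr (cell_refl Γ n x)⟩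

lemma card_cell_ne (x : ZMod p) : ((cell Γ n x).card : ℂ) ≠ 0 := by
  exact_mod_cast Nat.cast_ne_zero.mpr (card_cell_pos Γ n x).ne'

/-- cell-constant functions -/
def CellConst (w : ZMod p → ℂ) : Prop := ∀ x y, sameCell p Γ n x y → w x = w y

lemma condExp_cellConst (f : ZMod p → ℂ) : CellConst Γ n (condExp p Γ n f) := by
  intro x y h
  unfold condExp
  rw [show Finset.univ.filter (sameCell p Γ n x) = Finset.univ.filter (sameCell p Γ n y) from cell_eq Γ n h]

lemma condExp_of_cellConst {w : ZMod p → ℂ} (hw : CellConst Γ n w) (x : ZMod p) :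
    condExp p Γ n w x = w x := by
  unfold condExp
  rw [Finset.sum_congr rfl (fun y hy => (hw x y ((mem_cell Γ n).mp hy)).symm)]
  have hc : ((cell Γ n x).card : ℂ) ≠ 0 := card_cell_ne Γ n x
  rw [Finset.sum_const, nsmul_eq_mul]
  field_simp

/-- the key projection identity -/
lemma sum_condExp_mul {f w : ZMod p → ℂ} (hw : CellConst Γ n w) :
    ∑ x, condExp p Γ n f x * w x = ∑ x, f x * w x := by
  have step1 : ∀ x : ZMod p, condExp p Γ n f x * w x
      = ∑ y ∈ cell Γ n x, f y * w y / ((cell Γ n y).card : ℂ) := by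
    intro x
    unfold condExp
    rw [div_mul_eq_mul_div, Finset.sum_mul, Finset.sum_div]
    refine Finset.sum_congr rfl (fun y hy => ?_)
    have h : sameCell p Γ n x y := (mem_cell Γ n).mp hy
    rw [hw x y h, show Finset.univ.filter (sameCell p Γ n x) = Finset.univ.filter (sameCell p Γ n y) from cell_eq Γ n h]
  calc ∑ x, condExp p Γ n f x * w x
      = ∑ x, ∑ y ∈ cell Γ n x, f y * w y / ((cell Γ n y).card : ℂ) := by
        exact Finset.sum_congr rfl (fun x _ => step1 x)
    _ = ∑ y, ∑ x ∈ cell Γ n y, f y * w y / ((cell Γ n y).card : ℂ) := by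
        refine Finset.sum_comm' ?_
        intro x y
        simp only [Finset.mem_univ, true_and, and_true, mem_cell]
        exact ⟨fun h => cell_symm Γ n h, fun h => cell_symm Γ n h⟩
    _ = ∑ y, f y * w y := by
        refine Finset.sum_congr rfl (fun y _ => ?_)
        have hc : ((cell Γ n y).card : ℂ) ≠ 0 := card_cell_ne Γ n y
        rw [Finset.sum_const, nsmul_eq_mul]
        field_simp


def Sqs (u : ZMod p → ℂ) : ℝ := ∑ x, Complex.normSq (u x)

lemma sqs_eq (u : ZMod p → ℂ) : ((Sqs u : ℂ)) = ∑ x, u x * (starRingEnd ℂ) (u x) := by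
  unfold Sqs
  push_cast
  exact Finset.sum_congr rfl (fun x _ => (Complex.mul_conj (u x)).symm)

lemma sqs_nonneg (u : ZMod p → ℂ) : 0 ≤ Sqs u :=
  Finset.sum_nonneg (fun x _ => Complex.normSq_nonneg _)

lemma cellConst_conj {c : ZMod p → ℂ} (hc : CellConst Γ n c) :
    CellConst Γ n (fun x => (starRingEnd ℂ) (c x)) :=
  fun x y h => by simp [hc x y h]

lemma cross_zero {f c : ZMod p → ℂ} (hc : CellConst Γ n c) :
    ∑ x, (f x - condExp p Γ n f x) * (starRingEnd ℂ) (c x) = 0 := by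
  have := sum_condExp_mul Γ n (f := f) (w := fun x => (starRingEnd ℂ) (c x)) (cellConst_conj Γ n hc)
  simp only [sub_mul, Finset.sum_sub_distrib]
  rw [this, sub_self]

lemma condExp_sub (f g : ZMod p → ℂ) (x : ZMod p) :
    condExp p Γ n (f - g) x = condExp p Γ n f x - condExp p Γ n g x := by
  unfold condExp
  rw [← sub_div, ← Finset.sum_sub_distrib]
  rfl

lemma pythagoras (f : ZMod p → ℂ) :
    Sqs f = Sqs (condExp p Γ n f) + Sqs (f - condExp p Γ n f) := by
  have h : ((Sqs f : ℂ)) = ((Sqs (condExp p Γ n f) : ℂ)) + ((Sqs (f - condExp p Γ n f) : ℂ)) := by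
    set e := condExp p Γ n f with he
    have hcross : ∑ x, (f x - e x) * (starRingEnd ℂ) (e x) = 0 :=
      cross_zero Γ n (condExp_cellConst Γ n f)
    have hcross' : ∑ x, e x * (starRingEnd ℂ) (f x - e x) = 0 := by
      have : ∑ x, e x * (starRingEnd ℂ) (f x - e x)
          = (starRingEnd ℂ) (∑ x, (f x - e x) * (starRingEnd ℂ) (e x)) := by
        rw [map_sum]
        exact Finset.sum_congr rfl (fun x _ => by simp [mul_comm])
      rw [this, hcross, map_zero]
    rw [sqs_eq, sqs_eq, sqs_eq]
    have expand : ∀ x : ZMod p, f x * (starRingEnd ℂ) (f x)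
        = e x * (starRingEnd ℂ) (e x) + (f x - e x) * (starRingEnd ℂ) ((f - e) x)
          + (e x * (starRingEnd ℂ) (f x - e x) + (f x - e x) * (starRingEnd ℂ) (e x)) := by
      intro x
      simp only [Pi.sub_apply, map_sub]
      ring
    rw [Finset.sum_congr rfl (fun x _ => expand x)]
    rw [Finset.sum_add_distrib, Finset.sum_add_distrib, Finset.sum_add_distrib, hcross']
    have h2 : ∑ x, (f x - e x) * (starRingEnd ℂ) (e x) = 0 := hcross
    rw [h2, add_zero, add_zero]
    simp only [Pi.sub_apply]
  exact_mod_cast h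

lemma condExp_norm_le {f : ZMod p → ℂ} {M : ℝ} (hf : ∀ x, ‖f x‖ ≤ M) (x : ZMod p) :
    ‖condExp p Γ n f x‖ ≤ M := by
  have hM : (0:ℝ) ≤ M := le_trans (norm_nonneg _) (hf x)
  unfold condExp
  rw [norm_div]
  have hcard : (0:ℝ) < ((Finset.univ.filter (sameCell p Γ n x)).card : ℝ) := by
    exact_mod_cast card_cell_pos Γ n x
  have hnc : ‖(((Finset.univ.filter (sameCell p Γ n x)).card : ℕ) : ℂ)‖
      = ((Finset.univ.filter (sameCell p Γ n x)).card : ℝ) := by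
    simp
  rw [hnc, div_le_iff₀ hcard]
  refine le_trans (norm_sum_le _ _) ?_
  calc ∑ y ∈ Finset.univ.filter (sameCell p Γ n x), ‖f y‖
      ≤ ∑ _y ∈ Finset.univ.filter (sameCell p Γ n x), M :=
        Finset.sum_le_sum (fun y _ => hf y)
    _ = M * ((Finset.univ.filter (sameCell p Γ n x)).card : ℝ) := by
        rw [Finset.sum_const, nsmul_eq_mul]; ring

lemma cs (a b : ZMod p → ℂ) :
    ‖∑ x, a x * (starRingEnd ℂ) (b x)‖ ≤ Real.sqrt (Sqs a) * Real.sqrt (Sqs b) := by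
  have h1 : ‖∑ x, a x * (starRingEnd ℂ) (b x)‖ ≤ ∑ x, ‖a x‖ * ‖b x‖ := by
    refine le_trans (norm_sum_le _ _) (Finset.sum_le_sum (fun x _ => ?_))
    rw [norm_mul]
    gcongr
    exact le_of_eq (RCLike.norm_conj _)
  refine le_trans h1 ?_
  have h2 := Finset.sum_mul_sq_le_sq_mul_sq Finset.univ (fun x : ZMod p => ‖a x‖) (fun x => ‖b x‖)
  have ha : ∑ x, ‖a x‖ ^ 2 = Sqs a :=
    Finset.sum_congr rfl (fun x _ => by exact Complex.sq_norm _)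
  have hb : ∑ x, ‖b x‖ ^ 2 = Sqs b :=
    Finset.sum_congr rfl (fun x _ => by exact Complex.sq_norm _)
  rw [ha, hb] at h2
  have h3 : ∑ x, ‖a x‖ * ‖b x‖ ≤ Real.sqrt (Sqs a * Sqs b) := by
    have hnn : 0 ≤ ∑ x, ‖a x‖ * ‖b x‖ :=
      Finset.sum_nonneg (fun x _ => mul_nonneg (norm_nonneg _) (norm_nonneg _))
    rw [show ∑ x, ‖a x‖ * ‖b x‖ = Real.sqrt ((∑ x, ‖a x‖ * ‖b x‖) ^ 2) from (Real.sqrt_sq hnn).symm]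
    exact Real.sqrt_le_sqrt h2
  rw [← Real.sqrt_mul (sqs_nonneg a)]
  exact h3

lemma torusRep_toAddCircle (z : ZMod p) : torusRep (ZMod.toAddCircle z) = (z.val : ℝ) / p := by
  haveI : Fact ((0:ℝ) < 1) := ⟨one_pos⟩
  have h0 : (0:ℝ) < p := Nat.cast_pos.mpr (NeZero.pos _)
  have hmem : (z.val : ℝ)/p ∈ Set.Ico (0:ℝ) 1 := by
    constructor
    · positivity
    · rw [div_lt_one h0]; exact_mod_cast z.val_lt
  rw [ZMod.toAddCircle_apply, torusRep, AddCircle.coe_equivIco_mk_apply]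
  rw [div_one, mul_one, Int.fract_eq_self.mpr hmem]

lemma torusRep_preChar (r x : ZMod p) : torusRep (preChar p r x) = (((r * x).val : ℝ)) / p := by
  unfold preChar
  rw [AddMonoidHom.comp_apply]
  exact torusRep_toAddCircle _

lemma chi_eq (r x : ZMod p) :
    chi p r x = Complex.exp (↑(2 * Real.pi * (((r * x).val : ℝ) / p)) * Complex.I) := by
  unfold chi
  have hp0 : (p : ℂ) ≠ 0 := Nat.cast_ne_zero.mpr (NeZero.ne p)
  set m : ℕ := r.val * x.val / p with hm
  have hval : r.val * x.val = (r * x).val + p * m := by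
    rw [ZMod.val_mul, hm]
    exact (Nat.mod_add_div (r.val * x.val) p).symm
  have harg : 2 * (Real.pi : ℂ) * Complex.I * (r.val : ℂ) * (x.val : ℂ) / p
      = ↑(2 * Real.pi * (((r * x).val : ℝ) / p)) * Complex.I + (m : ℂ) * (2 * (Real.pi : ℂ) * Complex.I) := by
    have h : ((r.val : ℂ)) * (x.val : ℂ) = ((r * x).val : ℂ) + (p : ℂ) * (m : ℂ) := by
      exact_mod_cast congrArg (Nat.cast : ℕ → ℂ) hval
    simp only [Complex.ofReal_mul, Complex.ofReal_div, Complex.ofReal_natCast, Complex.ofReal_ofNat]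
    have hpp : (p : ℂ) * ((p : ℂ))⁻¹ = 1 := mul_inv_cancel₀ hp0
    linear_combination (2 * (Real.pi : ℂ) * Complex.I / (p : ℂ)) * h
      + (2 * (Real.pi : ℂ) * Complex.I * (m : ℂ)) * hpp
  rw [harg, Complex.exp_add]
  have hone : Complex.exp ((m : ℂ) * (2 * (Real.pi : ℂ) * Complex.I)) = 1 := by
    have h1 := Complex.exp_int_mul_two_pi_mul_I (m : ℤ)
    rw [show ((m : ℂ) * (2 * (Real.pi : ℂ) * Complex.I)) = ((m : ℤ) : ℂ) * (2 * ↑Real.pi * Complex.I) from by push_cast; ring]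
    exact h1
  rw [hone, mul_one]

lemma chi_norm (r x : ZMod p) : ‖chi p r x‖ = 1 := by
  rw [chi_eq, Complex.norm_exp_ofReal_mul_I]

lemma chi_dist {r x y : ZMod p} {n : ℕ} (hn : 0 < n)
    (hfloor : ⌊(n : ℝ) * torusRep (preChar p r x)⌋ = ⌊(n : ℝ) * torusRep (preChar p r y)⌋) :
    ‖chi p r x - chi p r y‖ ≤ 2 * Real.pi / n := by
  have hn' : (0:ℝ) < n := Nat.cast_pos.mpr hn
  set a := torusRep (preChar p r x) with ha
  set b := torusRep (preChar p r y) with hb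
  have hab : |a - b| < 1 / n := by
    have h1 : |(n:ℝ) * a - (n:ℝ) * b| < 1 := floor_dist hfloor
    rw [← mul_sub, abs_mul, abs_of_pos hn'] at h1
    rw [lt_div_iff₀ hn', mul_comm]
    exact h1
  rw [chi_eq, chi_eq, ← torusRep_preChar, ← torusRep_preChar, ← ha, ← hb]
  refine le_trans (expLip _ _) ?_
  have : |2 * Real.pi * a - 2 * Real.pi * b| = 2 * Real.pi * |a - b| := by
    rw [← mul_sub, abs_mul, abs_of_pos (by positivity : (0:ℝ) < 2 * Real.pi)]
  rw [this]
  rw [div_eq_mul_inv, ← one_div]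
  have h2 : (0:ℝ) < 2 * Real.pi := by positivity
  nlinarith [hab, h2]

lemma sameCell_mono {Γ' : Finset (ZMod p →+ AddCircle (1 : ℝ))} (hsub : Γ ⊆ Γ') {x y : ZMod p}
    (h : sameCell p Γ' n x y) : sameCell p Γ n x y := fun φ hφ => h φ (hsub hφ)

lemma cellConst_mono {Γ' : Finset (ZMod p →+ AddCircle (1 : ℝ))} (hsub : Γ ⊆ Γ')
    {w : ZMod p → ℂ} (hw : CellConst Γ n w) : CellConst Γ' n w :=
  fun x y h => hw x y (sameCell_mono Γ n hsub h)

lemma sqs_add_of_cross {a b : ZMod p → ℂ} (hc : ∑ x, b x * (starRingEnd ℂ) (a x) = 0) :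
    Sqs (fun x => a x + b x) = Sqs a + Sqs b := by
  have h : ((Sqs (fun x => a x + b x) : ℂ)) = ((Sqs a : ℂ)) + ((Sqs b : ℂ)) := by
    rw [sqs_eq, sqs_eq, sqs_eq]
    have hc' : ∑ x, a x * (starRingEnd ℂ) (b x) = 0 := by
      have : ∑ x, a x * (starRingEnd ℂ) (b x)
          = (starRingEnd ℂ) (∑ x, b x * (starRingEnd ℂ) (a x)) := by
        rw [map_sum]
        exact Finset.sum_congr rfl (fun x _ => by simp [mul_comm])
      rw [this, hc, map_zero]
    have expand : ∀ x : ZMod p, (a x + b x) * (starRingEnd ℂ) (a x + b x)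
        = a x * (starRingEnd ℂ) (a x) + b x * (starRingEnd ℂ) (b x)
          + (a x * (starRingEnd ℂ) (b x) + b x * (starRingEnd ℂ) (a x)) := by
      intro x
      simp only [map_add]
      ring
    rw [Finset.sum_congr rfl (fun x _ => expand x), Finset.sum_add_distrib,
      Finset.sum_add_distrib, Finset.sum_add_distrib, hc', hc, add_zero, add_zero]
  exact_mod_cast h

lemma sqs_le_of_bound {u : ZMod p → ℂ} {M : ℝ} (hu : ∀ x, ‖u x‖ ≤ M) : Sqs u ≤ p * M ^ 2 := by
  have hM : 0 ≤ M := le_trans (norm_nonneg _) (hu (0 : ZMod p))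
  unfold Sqs
  calc ∑ x, Complex.normSq (u x) ≤ ∑ _x : ZMod p, M ^ 2 := by
        refine Finset.sum_le_sum (fun x _ => ?_)
        rw [show Complex.normSq (u x) = ‖u x‖ ^ 2 from by exact (Complex.sq_norm _).symm]
        exact pow_le_pow_left₀ (norm_nonneg _) (hu x) 2
    _ = p * M ^ 2 := by
        rw [Finset.sum_const, nsmul_eq_mul, Finset.card_univ, ZMod.card]

lemma increment {δ : ℝ} (hδ0 : 0 < δ) {n : ℕ} (hn : 0 < n) (hnδ : 2 * Real.pi / n ≤ δ / 2)
    (f : ZMod p → ℂ) (hf2 : Sqs f ≤ p)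
    (r : ZMod p)
    (hbad : δ * p < ‖∑ x, (f x - condExp p Γ n f x) * (starRingEnd ℂ) (chi p r x)‖) :
    Sqs (condExp p Γ n f) + p * δ ^ 2 / 4 ≤ Sqs (condExp p (insert (preChar p r) Γ) n f) := by
  have hp0 : (0:ℝ) < p := Nat.cast_pos.mpr (NeZero.pos _)
  set Γ' := insert (preChar p r) Γ with hΓ'
  have hsub : Γ ⊆ Γ' := Finset.subset_insert _ _
  set E : ZMod p → ℂ := condExp p Γ n f with hE
  set E' : ZMod p → ℂ := condExp p Γ' n f with hE'
  set g : ZMod p → ℂ := fun x => f x - E x with hg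
  set χ : ZMod p → ℂ := chi p r with hχ
  -- E is Γ'-cell-constant
  have hEconst : CellConst Γ' n E := cellConst_mono Γ n hsub (condExp_cellConst Γ n f)
  -- h = E' - E = condExp Γ' g
  have hh : ∀ x, condExp p Γ' n g x = E' x - E x := by
    intro x
    have h1 : condExp p Γ' n (f - E) x = condExp p Γ' n f x - condExp p Γ' n E x :=
      condExp_sub Γ' n f E x
    have h2 : condExp p Γ' n E x = E x := condExp_of_cellConst Γ' n hEconst x
    have h3 : condExp p Γ' n (f - E) x = condExp p Γ' n g x := rfl
    rw [← h3, h1, h2]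
  set h : ZMod p → ℂ := condExp p Γ' n g with hhdef
  -- cross term zero
  have hcross : ∑ x, h x * (starRingEnd ℂ) (E x) = 0 := by
    have h1 : ∑ x, condExp p Γ' n g x * (starRingEnd ℂ) (E x) = ∑ x, g x * (starRingEnd ℂ) (E x) :=
      sum_condExp_mul Γ' n (cellConst_conj Γ' n hEconst)
    have h2 : ∑ x, g x * (starRingEnd ℂ) (E x) = 0 := cross_zero Γ n (condExp_cellConst Γ n f)
    rw [hhdef, h1, h2]
  -- energy identity
  have henergy : Sqs E' = Sqs E + Sqs h := by
    have heq : E' = fun x => E x + h x := by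
      funext x
      rw [hh x]; ring
    rw [heq]
    exact sqs_add_of_cross hcross
  -- quantitative bounds
  have hgsqs : Sqs g ≤ (p : ℝ) := by
    have hpy := pythagoras Γ n f
    have hnn := sqs_nonneg (condExp p Γ n f)
    have hgeq : Sqs (f - condExp p Γ n f) = Sqs g := rfl
    rw [hgeq] at hpy
    linarith
  have hhsqs : Sqs h ≤ (p : ℝ) := by
    have hpy := pythagoras Γ' n g
    have hnn := sqs_nonneg (g - condExp p Γ' n g)
    rw [← hhdef] at hpy
    linarith
  -- chi close to its conditional expectation on Γ' cells
  have hclose : ∀ x, ‖χ x - condExp p Γ' n χ x‖ ≤ 2 * Real.pi / n := by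
    intro x
    have hcard : ((cell Γ' n x).card : ℂ) ≠ 0 := card_cell_ne Γ' n x
    have hrw : χ x - condExp p Γ' n χ x
        = (∑ y ∈ cell Γ' n x, (χ x - χ y)) / ((cell Γ' n x).card : ℂ) := by
      rw [Finset.sum_sub_distrib, sub_div]
      congr 1
      rw [Finset.sum_const, nsmul_eq_mul]
      field_simp
    rw [hrw, norm_div]
    have hnc : ‖((cell Γ' n x).card : ℂ)‖ = ((cell Γ' n x).card : ℝ) := by simp
    rw [hnc]
    have hcard' : (0:ℝ) < ((cell Γ' n x).card : ℝ) := by exact_mod_cast card_cell_pos Γ' n x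
    rw [div_le_iff₀ hcard']
    refine le_trans (norm_sum_le _ _) ?_
    calc ∑ y ∈ cell Γ' n x, ‖χ x - χ y‖ ≤ ∑ _y ∈ cell Γ' n x, (2 * Real.pi / n) := by
          refine Finset.sum_le_sum (fun y hy => ?_)
          have hsc : sameCell p Γ' n x y := (mem_cell Γ' n).mp hy
          exact chi_dist hn (hsc (preChar p r) (Finset.mem_insert_self _ _))
      _ = 2 * Real.pi / n * ((cell Γ' n x).card : ℝ) := by
          rw [Finset.sum_const, nsmul_eq_mul]; ring
  -- Sqs of (χ - E'χ) small
  have hχsmall : Sqs (fun x => χ x - condExp p Γ' n χ x) ≤ p * (δ / 2) ^ 2 := by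
    refine le_trans (sqs_le_of_bound (M := 2 * Real.pi / n) hclose) ?_
    have : (2 * Real.pi / n) ^ 2 ≤ (δ / 2) ^ 2 := by
      refine pow_le_pow_left₀ (by positivity) hnδ 2
    nlinarith
  -- S(g, E'χ) is large
  have hs1 : ‖∑ x, g x * (starRingEnd ℂ) (χ x - condExp p Γ' n χ x)‖ ≤ p * δ / 2 := by
    refine le_trans (cs g _) ?_
    have h1 : Real.sqrt (Sqs g) ≤ Real.sqrt p := Real.sqrt_le_sqrt hgsqs
    have h2 : Real.sqrt (Sqs (fun x => χ x - condExp p Γ' n χ x)) ≤ Real.sqrt (p * (δ/2)^2) :=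
      Real.sqrt_le_sqrt hχsmall
    have h3 : Real.sqrt (p * (δ/2)^2) = Real.sqrt p * (δ/2) := by
      rw [Real.sqrt_mul (le_of_lt hp0), Real.sqrt_sq (by positivity)]
    calc Real.sqrt (Sqs g) * Real.sqrt (Sqs (fun x => χ x - condExp p Γ' n χ x))
        ≤ Real.sqrt p * (Real.sqrt p * (δ/2)) := by
          rw [← h3]
          exact mul_le_mul h1 h2 (Real.sqrt_nonneg _) (Real.sqrt_nonneg _)
      _ = p * δ / 2 := by
          rw [← mul_assoc, Real.mul_self_sqrt (le_of_lt hp0)]; ring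
  have hbig : p * δ / 2 ≤ ‖∑ x, g x * (starRingEnd ℂ) (condExp p Γ' n χ x)‖ := by
    have hsplit : ∑ x, g x * (starRingEnd ℂ) (χ x)
        = ∑ x, g x * (starRingEnd ℂ) (condExp p Γ' n χ x)
          + ∑ x, g x * (starRingEnd ℂ) (χ x - condExp p Γ' n χ x) := by
      rw [← Finset.sum_add_distrib]
      refine Finset.sum_congr rfl (fun x _ => ?_)
      rw [map_sub]
      ring
    have hb : δ * p < ‖∑ x, g x * (starRingEnd ℂ) (χ x)‖ := hbad
    have := norm_sub_norm_le (∑ x, g x * (starRingEnd ℂ) (χ x))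
      (∑ x, g x * (starRingEnd ℂ) (χ x - condExp p Γ' n χ x))
    have heq : ∑ x, g x * (starRingEnd ℂ) (χ x)
        - ∑ x, g x * (starRingEnd ℂ) (χ x - condExp p Γ' n χ x)
        = ∑ x, g x * (starRingEnd ℂ) (condExp p Γ' n χ x) := by
      rw [hsplit]; ring
    rw [heq] at this
    linarith
  -- pass to h via projection
  have hproj : ∑ x, h x * (starRingEnd ℂ) (condExp p Γ' n χ x)
      = ∑ x, g x * (starRingEnd ℂ) (condExp p Γ' n χ x) := by
    exact sum_condExp_mul Γ' n (cellConst_conj Γ' n (condExp_cellConst Γ' n χ))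
  -- bound on E'χ
  have hEχ : Sqs (condExp p Γ' n χ) ≤ (p : ℝ) := by
    have : ∀ x, ‖condExp p Γ' n χ x‖ ≤ 1 :=
      fun x => condExp_norm_le Γ' n (fun y => le_of_eq (chi_norm r y)) x
    have := sqs_le_of_bound (M := 1) this
    simpa using this
  have hfinal : p * δ / 2 ≤ Real.sqrt (Sqs h) * Real.sqrt p := by
    have h1 : ‖∑ x, h x * (starRingEnd ℂ) (condExp p Γ' n χ x)‖
        ≤ Real.sqrt (Sqs h) * Real.sqrt (Sqs (condExp p Γ' n χ)) := cs h _
    have h2 : Real.sqrt (Sqs (condExp p Γ' n χ)) ≤ Real.sqrt p := Real.sqrt_le_sqrt hEχ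
    have h3 : Real.sqrt (Sqs h) * Real.sqrt (Sqs (condExp p Γ' n χ))
        ≤ Real.sqrt (Sqs h) * Real.sqrt p := by
      exact mul_le_mul_of_nonneg_left h2 (Real.sqrt_nonneg _)
    rw [hproj] at h1
    linarith
  have hhlow : p * δ ^ 2 / 4 ≤ Sqs h := by
    have hsp : (0:ℝ) < Real.sqrt p := Real.sqrt_pos.mpr hp0
    have h1 : Real.sqrt p * (δ / 2) ≤ Real.sqrt (Sqs h) := by
      rw [show (p:ℝ) * δ / 2 = (Real.sqrt p * Real.sqrt p) * δ / 2 from by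
        rw [Real.mul_self_sqrt (le_of_lt hp0)]] at hfinal
      have := (mul_le_mul_iff_of_pos_right hsp).mp (by linarith [hfinal] : Real.sqrt p * (δ/2) * Real.sqrt p ≤ Real.sqrt (Sqs h) * Real.sqrt p)
      exact this
    have h2 : (Real.sqrt p * (δ/2)) ^ 2 ≤ Real.sqrt (Sqs h) ^ 2 := by
      refine pow_le_pow_left₀ (by positivity) h1 2
    rw [Real.sq_sqrt (sqs_nonneg _)] at h2
    calc p * δ ^ 2 / 4 = (Real.sqrt p * (δ/2)) ^ 2 := by
          rw [mul_pow, Real.sq_sqrt (le_of_lt hp0)]; ring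
      _ ≤ Sqs h := h2
  linarith [henergy]

lemma iterate {δ : ℝ} (hδ0 : 0 < δ) {n : ℕ} (hn : 0 < n) (hnδ : 2 * Real.pi / n ≤ δ / 2)
    (f : ZMod p → ℂ) (hf1 : ∀ x, ‖f x‖ ≤ 1) :
    ∀ k : ℕ, ∀ Γ : Finset (ZMod p →+ AddCircle (1 : ℝ)),
      (p : ℝ) ≤ Sqs (condExp p Γ n f) + k * (p * δ ^ 2 / 4) →
      (Γ.card : ℝ) * (p * δ ^ 2 / 4) ≤ Sqs (condExp p Γ n f) →
      ∃ Δ : Finset (ZMod p →+ AddCircle (1 : ℝ)), (Δ.card : ℝ) ≤ 4 / δ ^ 2 ∧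
        ∀ r : ZMod p, ‖∑ x, (f x - condExp p Δ n f x) * (starRingEnd ℂ) (chi p r x)‖ ≤ δ * p := by
  have hp0 : (0:ℝ) < p := Nat.cast_pos.mpr (NeZero.pos _)
  have hf2 : Sqs f ≤ (p : ℝ) := by simpa using sqs_le_of_bound (M := 1) hf1
  have hub : ∀ Γ : Finset (ZMod p →+ AddCircle (1 : ℝ)), Sqs (condExp p Γ n f) ≤ (p : ℝ) := by
    intro Γ
    have hpy := pythagoras Γ n f
    have hnn := sqs_nonneg (f - condExp p Γ n f)
    linarith
  have hgoodcase : ∀ Γ : Finset (ZMod p →+ AddCircle (1 : ℝ)),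
      (Γ.card : ℝ) * (p * δ ^ 2 / 4) ≤ Sqs (condExp p Γ n f) → (Γ.card : ℝ) ≤ 4 / δ ^ 2 := by
    intro Γ h2
    have h3 : (Γ.card : ℝ) * (p * δ ^ 2 / 4) ≤ p := le_trans h2 (hub Γ)
    rw [le_div_iff₀ (by positivity : (0:ℝ) < δ ^ 2)]
    nlinarith
  intro k
  induction k with
  | zero =>
    intro Γ h1 h2
    by_cases hgood : ∀ r : ZMod p,
        ‖∑ x, (f x - condExp p Γ n f x) * (starRingEnd ℂ) (chi p r x)‖ ≤ δ * p
    · exact ⟨Γ, hgoodcase Γ h2, hgood⟩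
    · exfalso
      push_neg at hgood
      obtain ⟨r, hr⟩ := hgood
      have hinc := increment Γ hδ0 hn hnδ f hf2 r hr
      have := hub (insert (preChar p r) Γ)
      simp only [Nat.cast_zero, zero_mul, add_zero] at h1
      have hc : (0:ℝ) < p * δ ^ 2 / 4 := by positivity
      linarith
  | succ k ih =>
    intro Γ h1 h2
    by_cases hgood : ∀ r : ZMod p,
        ‖∑ x, (f x - condExp p Γ n f x) * (starRingEnd ℂ) (chi p r x)‖ ≤ δ * p
    · exact ⟨Γ, hgoodcase Γ h2, hgood⟩
    · push_neg at hgood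
      obtain ⟨r, hr⟩ := hgood
      have hinc := increment Γ hδ0 hn hnδ f hf2 r hr
      refine ih (insert (preChar p r) Γ) ?_ ?_
      · push_cast
        push_cast at h1
        linarith
      · have hcard : ((insert (preChar p r) Γ).card : ℝ) ≤ (Γ.card : ℝ) + 1 := by
          exact_mod_cast Finset.card_insert_le _ _
        have hc0 : (0:ℝ) ≤ p * δ ^ 2 / 4 := by positivity
        nlinarith

end Unif
end

theorem uniformization (p : ℕ) (hp : p.Prime) (δ : ℝ) (hδ0 : 0 < δ) (hδ1 : δ ≤ 1)
    (f : ZMod p → ℂ) (hf : ∀ x, ‖f x‖ ≤ 1) :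
    haveI : NeZero p := ⟨hp.ne_zero⟩
    ∃ (Γ : Finset (ZMod p →+ AddCircle (1 : ℝ))) (n : ℕ), 0 < n ∧
      (Γ.card : ℝ) ≤ 4 / δ ^ 2 ∧ (n : ℝ) ≤ 16 / δ ∧
      ∀ r : ZMod p,
        ‖(1 / p : ℂ) * ∑ x : ZMod p,
            (f x - condExp p Γ n f x) * (starRingEnd ℂ) (chi p r x)‖ ≤ δ := by
  haveI : NeZero p := ⟨hp.ne_zero⟩
  have hp0 : (0:ℝ) < p := Nat.cast_pos.mpr hp.pos
  set n : ℕ := Nat.floor ((16:ℝ)/δ) with hn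
  have h16 : (16:ℝ) ≤ 16/δ := by
    rw [le_div_iff₀ hδ0]; nlinarith
  have hn0 : 0 < n := by
    rw [hn]
    have : (1:ℝ) ≤ 16/δ := by linarith
    exact Nat.floor_pos.mpr this
  have hnle : (n:ℝ) ≤ 16/δ := Nat.floor_le (by positivity)
  have hngt : (16:ℝ)/δ - 1 < n := by
    rw [hn]; exact Nat.sub_one_lt_floor _
  have hπ : Real.pi < 3.15 := by
    have := Real.pi_lt_d2
    linarith
  have hnge : 4*Real.pi/δ ≤ (n:ℝ) := by
    have h1 : (16 - 4*Real.pi)/δ ≥ 1 := by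
      rw [ge_iff_le, le_div_iff₀ hδ0]
      nlinarith [Real.pi_gt_three]
    have h2 : (16 - 4*Real.pi)/δ = 16/δ - 4*Real.pi/δ := sub_div _ _ _
    linarith
  have hnδ : 2 * Real.pi / n ≤ δ / 2 := by
    have hnpos : (0:ℝ) < n := Nat.cast_pos.mpr hn0
    rw [div_le_div_iff₀ hnpos (by norm_num : (0:ℝ) < 2)]
    have h1 : δ * (4*Real.pi/δ) ≤ δ * n := by
      exact mul_le_mul_of_nonneg_left hnge (le_of_lt hδ0)
    rw [mul_div_assoc', mul_comm δ (4*Real.pi), mul_div_assoc, div_self hδ0.ne', mul_one] at h1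
    linarith
  set k : ℕ := Nat.ceil ((4:ℝ)/δ^2) with hk
  have hiter := Unif.iterate hδ0 hn0 hnδ f hf k ∅ ?_ ?_
  · obtain ⟨Δ, hcard, hgood⟩ := hiter
    refine ⟨Δ, n, hn0, hcard, hnle, fun r => ?_⟩
    have h1 := hgood r
    rw [norm_mul]
    have h2 : ‖(1/p : ℂ)‖ = 1/(p:ℝ) := by
      rw [norm_div, norm_one]
      simp
    rw [h2]
    rw [div_mul_eq_mul_div, one_mul, div_le_iff₀ hp0]
    linarith
  · have hk4 : (4:ℝ)/δ^2 ≤ (k:ℝ) := Nat.le_ceil _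
    have hnn := Unif.sqs_nonneg (condExp p ∅ n f)
    have h3 : (4/δ^2) * (p * δ^2/4) = p := by
      field_simp
    nlinarith [mul_le_mul_of_nonneg_right hk4 (by positivity : (0:ℝ) ≤ p * δ^2/4)]
  · simp [Unif.sqs_nonneg]
end

section
/- Let m, K > 0 be integers, let b_1, …, b_m be integers with gcd(b_1,…,b_m) = 1 and |b_j| ≤ K for all j, and let b be an integer with |b| ≤ K. Then there exist integers c_1, …, c_m with |c_j| ≤ K for all j and b_1c_1 + … + b_mc_m = b. -/
open Finset

/-- Bounded Bézout for two variables. -/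
lemma two_var_bezout (K a g t : ℤ) (hK : 0 < K) (ha : |a| ≤ K) (hg1 : 1 ≤ g)
    (hgK : g ≤ K) (hcop : IsCoprime a g) (ht : |t| ≤ K) :
    ∃ x y : ℤ, |x| ≤ K ∧ |y| ≤ K ∧ a * x + g * y = t := by
  rcases eq_or_lt_of_le hg1 with hg1' | hg2
  · exact ⟨0, t, by simpa using hK.le, ht, by rw [← hg1']; ring⟩
  -- g ≥ 2
  obtain ⟨u, v, huv⟩ := hcop
  have hgne : g ≠ 0 := by omega
  set x0 : ℤ := (u * t) % g with hx0
  have hx0nn : 0 ≤ x0 := Int.emod_nonneg _ hgne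
  have hx0lt : x0 < g := Int.emod_lt_of_pos _ (by omega)
  set x : ℤ := if 2 * x0 ≤ g then x0 else x0 - g with hx
  have hxb : 2 * |x| ≤ g := by
    rw [hx]; split_ifs with h
    · rwa [abs_of_nonneg hx0nn]
    · rw [abs_of_nonpos (by omega)]; omega
  have hdvd : g ∣ u * t - x := by
    have h1 : g ∣ u * t - x0 := Int.dvd_self_sub_of_emod_eq rfl
    rw [hx]; split_ifs with h
    · exact h1
    · have : u * t - (x0 - g) = (u * t - x0) + g := by ring
      rw [this]; exact dvd_add h1 dvd_rfl
  have hdvd2 : g ∣ t - a * x := by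
    have ht' : t - a * x = a * (u * t - x) + g * (v * t) := by
      have : (u * a + v * g) * t = t := by rw [huv]; ring
      linarith [this]
    rw [ht']
    exact dvd_add (Dvd.dvd.mul_left hdvd a) (Dvd.intro _ rfl)
  obtain ⟨y, hy⟩ := hdvd2
  refine ⟨x, y, ?_, ?_, by linarith [hy]⟩
  · calc |x| ≤ g := by omega
      _ ≤ K := hgK
  · -- g * |y| = |t - a x| ≤ |t| + |a| * |x|
    have h1 : g * |y| = |t - a * x| := by
      rw [hy, abs_mul, abs_of_pos (by omega : (0:ℤ) < g)]
    have h2 : |t - a * x| ≤ |t| + |a| * |x| := by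
      calc |t - a * x| ≤ |t| + |a * x| := abs_sub _ _
        _ = |t| + |a| * |x| := by rw [abs_mul]
    nlinarith [abs_nonneg y, abs_nonneg a, abs_nonneg x]

lemma aux_bezout : ∀ (m : ℕ) (K : ℤ), 0 < K → ∀ (b : Fin (m + 1) → ℤ),
    Finset.univ.gcd b = 1 → (∀ j, |b j| ≤ K) → ∀ t : ℤ, |t| ≤ K →
    ∃ c : Fin (m + 1) → ℤ, (∀ j, |c j| ≤ K) ∧ ∑ j, b j * c j = t := by
  intro m
  induction m with
  | zero =>
    intro K hK b hgcd hb t ht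
    have h0 : |b 0| = 1 := by
      have : Finset.univ.gcd b = normalize (b 0) := by
        rw [show (Finset.univ : Finset (Fin 1)) = {0} from rfl, Finset.gcd_singleton]
      rw [this, ← Int.abs_eq_normalize] at hgcd
      exact hgcd
    refine ⟨fun _ => b 0 * t, fun j => ?_, ?_⟩
    · rw [abs_mul, h0, one_mul]; exact ht
    · rw [Fin.sum_univ_one, ← mul_assoc, ← abs_mul_abs_self, h0]; ring
  | succ m ih =>
    intro K hK b hgcd hb t ht
    set b' : Fin (m + 1) → ℤ := fun j => b j.succ with hb'
    set g : ℤ := Finset.univ.gcd b' with hg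
    have hsplit : Finset.univ.gcd b = GCDMonoid.gcd (b 0) g := by
      rw [Fin.univ_succ, Finset.cons_eq_insert, Finset.gcd_insert, Finset.map_eq_image,
        Finset.gcd_image]
      rfl
    by_cases hg0 : g = 0
    · -- all b' are zero, so |b 0| = 1
      have h0 : |b 0| = 1 := by
        rw [hsplit, hg0, gcd_zero_right, ← Int.abs_eq_normalize] at hgcd
        exact hgcd
      have hz : ∀ j : Fin (m + 1), b' j = 0 := by
        intro j
        exact Finset.gcd_eq_zero_iff.1 hg0 j (Finset.mem_univ j)
      refine ⟨Fin.cons (b 0 * t) 0, fun j => ?_, ?_⟩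
      · refine Fin.cases ?_ (fun i => ?_) j
        · rw [Fin.cons_zero, abs_mul, h0, one_mul]; exact ht
        · simp [hK.le]
      · rw [Fin.sum_univ_succ]
        simp only [Fin.cons_zero, Fin.cons_succ, Pi.zero_apply, mul_zero, Finset.sum_const_zero,
          add_zero]
        rw [← mul_assoc, ← abs_mul_abs_self, h0]; ring
    · -- g ≥ 1
      have hgnn : 0 ≤ g := by
        have := Finset.normalize_gcd (s := (Finset.univ : Finset (Fin (m+1)))) (f := b')
        rw [← hg] at this
        rw [← this, ← Int.abs_eq_normalize]
        positivity
      have hg1 : 1 ≤ g := by omega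
      -- g ≤ K : g divides some nonzero b' j
      obtain ⟨j0, hj0⟩ : ∃ j, b' j ≠ 0 := by
        by_contra h
        push_neg at h
        exact hg0 (Finset.gcd_eq_zero_iff.2 fun x _ => h x)
      have hgdvd : ∀ j, g ∣ b' j := fun j => Finset.gcd_dvd (Finset.mem_univ j)
      have hgK : g ≤ K := by
        have h1 : g ∣ |b' j0| := (dvd_abs g (b' j0)).mpr (hgdvd j0)
        have h2 : g ≤ |b' j0| := Int.le_of_dvd (abs_pos.2 hj0) h1
        exact h2.trans (hb j0.succ)
      -- coprimality of b 0 and g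
      have hcop : IsCoprime (b 0) g := by
        rw [Int.isCoprime_iff_gcd_eq_one]
        have : (Int.gcd (b 0) g : ℤ) = 1 := by
          rw [Int.coe_gcd, ← hsplit, hgcd]
        exact_mod_cast this
      obtain ⟨x, y, hx, hy, hxy⟩ := two_var_bezout K (b 0) g t hK (hb 0) hg1 hgK hcop ht
      -- apply IH to b' / g with target y
      set b'' : Fin (m + 1) → ℤ := fun j => b' j / g with hb''
      have hgcd'' : Finset.univ.gcd b'' = 1 := Finset.gcd_div_eq_one (Finset.mem_univ j0) hj0
      have hbb : ∀ j, b' j = g * b'' j := by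
        intro j
        rw [hb'']
        exact (Int.mul_ediv_cancel' (hgdvd j)).symm
      have hb''K : ∀ j, |b'' j| ≤ K := by
        intro j
        have h1 : |b' j| = g * |b'' j| := by
          rw [hbb j, abs_mul, abs_of_nonneg hgnn]
        have h2 : |b'' j| ≤ |b' j| := by nlinarith [abs_nonneg (b'' j)]
        exact h2.trans (hb j.succ)
      obtain ⟨c', hc', hsum⟩ := ih K hK b'' hgcd'' hb''K y hy
      refine ⟨Fin.cons x c', fun j => ?_, ?_⟩
      · refine Fin.cases ?_ (fun i => ?_) j
        · rwa [Fin.cons_zero]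
        · rw [Fin.cons_succ]; exact hc' i
      · rw [Fin.sum_univ_succ, Fin.cons_zero]
        have : ∑ i : Fin (m + 1), b i.succ * (Fin.cons x c' : Fin (m+2) → ℤ) i.succ
            = g * y := by
          calc ∑ i : Fin (m + 1), b i.succ * (Fin.cons x c' : Fin (m+2) → ℤ) i.succ
              = ∑ i : Fin (m + 1), g * (b'' i * c' i) := by
                refine Finset.sum_congr rfl fun i _ => ?_
                rw [Fin.cons_succ, show b i.succ = b' i from rfl, hbb i]; ring
            _ = g * ∑ i : Fin (m + 1), b'' i * c' i := by rw [Finset.mul_sum]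
            _ = g * y := by rw [hsum]
        rw [this, hxy]

theorem bounded_bezout (m K : ℕ) (hm : 0 < m) (hK : 0 < K)
    (b : Fin m → ℤ) (hgcd : Finset.univ.gcd b = 1)
    (hb : ∀ j, |b j| ≤ (K : ℤ)) (t : ℤ) (ht : |t| ≤ (K : ℤ)) :
    ∃ c : Fin m → ℤ, (∀ j, |c j| ≤ (K : ℤ)) ∧ ∑ j, b j * c j = t := by
  obtain ⟨m', rfl⟩ : ∃ m', m = m' + 1 := ⟨m - 1, by omega⟩
  exact aux_bezout m' K (by exact_mod_cast hK) b hgcd hb t ht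
end

section
/- Let a = (a_1,…,a_d) ∈ ℤ^d with gcd(a_1,…,a_d) = 1, and let v_2,…,v_d ∈ ℤ^d be vectors orthogonal to a such that the matrix A with rows a, v_2, …, v_d has determinant Σ_j a_j². Then the ℤ-span of v_2,…,v_d equals {x ∈ ℤ^d : ⟨a,x⟩ = 0}, i.e. every integer vector orthogonal to a is an integer linear combination of v_2,…,v_d. -/
open Finset Matrix

/-- The gcd of a finite family lies in the ideal spanned by its image. -/
lemma gcd_mem_span_image {ι : Type*} [DecidableEq ι] (s : Finset ι) (f : ι → ℤ) :
    (s.gcd f : ℤ) ∈ Ideal.span (↑(s.image f) : Set ℤ) := by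
  induction s using Finset.induction_on with
  | empty => simp
  | @insert i s his ih =>
    rw [Finset.gcd_insert, Finset.image_insert, Finset.coe_insert, Ideal.span_insert]
    have h1 : gcd (f i) (s.gcd f) ∈ Ideal.span ({f i, s.gcd f} : Set ℤ) := by
      rw [← span_gcd]; exact Ideal.subset_span rfl
    refine Ideal.span_le.mpr ?_ h1
    rintro x hx
    rcases hx with rfl | hx
    · exact Submodule.mem_sup_left (Ideal.subset_span rfl)
    · simp only [Set.mem_singleton_iff] at hx
      subst hx
      exact Submodule.mem_sup_right ih

theorem rows_span_orthogonal_lattice (d : ℕ) (hd : 1 ≤ d)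
    (a : Fin d → ℤ) (hgcd : Finset.univ.gcd a = 1)
    (A : Matrix (Fin d) (Fin d) ℤ)
    (hrow0 : ∀ j, A ⟨0, hd⟩ j = a j)
    (horth : ∀ i : Fin d, i ≠ ⟨0, hd⟩ → ∑ j, a j * A i j = 0)
    (hdet : A.det = ∑ j, a j ^ 2) :
    ∀ x : Fin d → ℤ, (∑ j, a j * x j = 0) →
      ∃ c : Fin d → ℤ, c ⟨0, hd⟩ = 0 ∧ ∀ j, x j = ∑ i, c i * A i j := by
  intro x hx
  set i0 : Fin d := ⟨0, hd⟩ with hi0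
  set N : ℤ := ∑ j, a j ^ 2 with hN
  -- a ≠ 0
  have ha : a ≠ 0 := by
    intro h
    have h0 : Finset.univ.gcd a = 0 :=
      Finset.gcd_eq_zero_iff.mpr fun i _ => by rw [h]; rfl
    rw [h0] at hgcd
    exact one_ne_zero hgcd.symm
  have hNpos : 0 < N := by
    rcases Function.ne_iff.mp ha with ⟨j, hj⟩
    have h1 : (0:ℤ) < a j ^ 2 :=
      lt_of_le_of_ne (sq_nonneg _) (Ne.symm (pow_ne_zero 2 hj))
    have h2 : a j ^ 2 ≤ N :=
      Finset.single_le_sum (fun i _ => sq_nonneg (a i)) (Finset.mem_univ j)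
    linarith
  -- Bezout: there is u with ⟨a, u⟩ = 1
  obtain ⟨u, hu⟩ : ∃ u : Fin d → ℤ, ∑ j, a j * u j = 1 := by
    have h1 : (1 : ℤ) ∈ Ideal.span (Set.range a) := by
      have h2 := gcd_mem_span_image Finset.univ a
      rw [hgcd] at h2
      have hsub : (↑(Finset.univ.image a) : Set ℤ) ⊆ Set.range a := by
        intro y hy
        simpa using hy
      exact Ideal.span_mono hsub h2
    rw [← Ideal.submodule_span_eq, Submodule.mem_span_range_iff_exists_fun] at h1
    obtain ⟨c, hc⟩ := h1
    exact ⟨c, by simpa [mul_comm] using hc⟩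
  -- the matrix C with row i0 replaced by u
  set C : Matrix (Fin d) (Fin d) ℤ := A.updateRow i0 u with hC
  have hCne : ∀ i, i ≠ i0 → ∀ j, C i j = A i j := fun i hi j => by
    rw [hC, Matrix.updateRow_ne hi]
  have hCi0 : ∀ j, C i0 j = u j := fun j => by rw [hC, Matrix.updateRow_self]
  have hupd : ∀ v w : Fin d → ℤ,
      ((A.updateRow i0 v).updateRow i0 w) = A.updateRow i0 w := by
    intro v w
    ext i j
    by_cases h : i = i0
    · subst h; simp [Matrix.updateRow_self]
    · simp [Matrix.updateRow_ne h]
  -- det C = 1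
  have hdetC : C.det = 1 := by
    have hA : A = C.updateRow i0 a := by
      rw [hC, hupd]
      ext i j
      by_cases h : i = i0
      · subst h; rw [Matrix.updateRow_self, hrow0]
      · rw [Matrix.updateRow_ne h]
    set r : Fin d → ℤ := a - N • u with hr
    have har : a = N • u + r := by rw [hr]; ext j; simp
    -- the matrix with row r has all rows orthogonal to a, hence det 0
    have hD : (C.updateRow i0 r).det = 0 := by
      by_contra hne
      apply ha
      apply Matrix.eq_zero_of_mulVec_eq_zero hne
      ext i
      simp only [Matrix.mulVec, dotProduct, Pi.zero_apply]
      by_cases h : i = i0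
      · subst h
        simp only [Matrix.updateRow_self]
        have hrsum : ∑ j, r j * a j
            = ∑ j, a j * a j - N * ∑ j, a j * u j := by
          rw [hr, Finset.mul_sum]
          rw [← Finset.sum_sub_distrib]
          refine Finset.sum_congr rfl fun j _ => by simp; ring
        have h1 : ∑ j, a j * a j = N := by
          rw [hN]; refine Finset.sum_congr rfl fun j _ => by ring
        rw [hrsum, h1, hu]; ring
      · rw [Matrix.updateRow_ne h]
        rw [← horth i h]
        refine Finset.sum_congr rfl fun j _ => by rw [hCne i h j]; ring
    have hdecomp : A.det = N * C.det + (C.updateRow i0 r).det := by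
      conv_lhs => rw [hA, har]
      rw [Matrix.det_updateRow_add, Matrix.det_updateRow_smul]
      congr 2
      rw [hC, hupd]
    rw [hdet, hD, add_zero] at hdecomp
    have h2 : N * C.det = N * 1 := by linarith
    exact mul_left_cancel₀ (ne_of_gt hNpos) h2
  -- express x in the rows of C
  set c : Fin d → ℤ := Matrix.vecMul x (Matrix.adjugate C) with hc
  have hxc : ∀ j, x j = ∑ i, c i * C i j := by
    have h1 : Matrix.vecMul c C = x := by
      rw [hc, Matrix.vecMul_vecMul, Matrix.adjugate_mul, hdetC, one_smul,
        Matrix.vecMul_one]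
    intro j
    rw [← h1]
    simp [Matrix.vecMul, dotProduct]
  -- c i0 = 0
  have hc0 : c i0 = 0 := by
    have h1 : ∑ i, c i * ∑ j, a j * C i j = 0 := by
      calc ∑ i, c i * ∑ j, a j * C i j
          = ∑ i, ∑ j, a j * (c i * C i j) := by
            refine Finset.sum_congr rfl fun i _ => ?_
            rw [Finset.mul_sum]
            exact Finset.sum_congr rfl fun j _ => by ring
        _ = ∑ j, ∑ i, a j * (c i * C i j) := Finset.sum_comm
        _ = ∑ j, a j * x j := by
            refine Finset.sum_congr rfl fun j _ => ?_
            rw [← Finset.mul_sum, ← hxc j]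
        _ = 0 := hx
    have h2 : ∑ i, c i * ∑ j, a j * C i j = c i0 := by
      rw [Finset.sum_eq_single i0]
      · have h3 : ∑ j, a j * C i0 j = 1 := by
          rw [← hu]; exact Finset.sum_congr rfl fun j _ => by rw [hCi0 j]
        rw [h3, mul_one]
      · intro i _ hi
        have h4 : ∑ j, a j * C i j = 0 := by
          rw [← horth i hi]
          exact Finset.sum_congr rfl fun j _ => by rw [hCne i hi j]
        rw [h4, mul_zero]
      · intro h; exact absurd (Finset.mem_univ i0) h
    rw [h2] at h1
    exact h1
  refine ⟨c, hc0, fun j => ?_⟩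
  rw [hxc j]
  refine Finset.sum_congr rfl fun i _ => ?_
  by_cases h : i = i0
  · subst h; rw [hc0]; ring
  · rw [hCne i h j]
end
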